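/- Let W be a standard one-dimensional Brownian motion, T>0, and f:ℝ→ℝ bounded and continuous. Define Ŵ(t) = W(T−t) and let β(t) = Ŵ(t) − W(T) + ∫_0^t Ŵ(s)/(T−s) ds, which is a Brownian motion with respect to the filtration H (the smallest complete filtration making W(T) measurable at time 0 and containing the natural filtration of β). Then the process L_ε(t) = ε^{−1}[f(εW), εW](t) admits the representation L_ε(t) = −∫_0^t f(εW(s)) dW(s) − ∫_{T−t}^T f(εŴ(s)) dβ(s) + ∫_0^t f(εW(s)) (W(s)/s) ds for t ∈ [0,T], i.e. L_ε is the sum of an F^W-martingale, the time reversal of an H-martingale, and a bounded variation term. -/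

import Mathlib

open MeasureTheory ProbabilityTheory Filter Topology

noncomputable section

/-- A finite partition of the interval `[a, b]`. -/
structure IccPartition (a b : ℝ) where
  n : ℕ
  npos : 0 < n
  u : ℕ → ℝ
  left : u 0 = a
  right : u n = b
  mono : ∀ i, i < n → u i ≤ u (i + 1)

/-- The mesh of a partition. -/
def IccPartition.mesh {a b : ℝ} (π : IccPartition a b) : ℝ :=
  ⨆ i : Fin π.n, (π.u (i + 1) - π.u i)

/-- The sum of products of increments of `X` and `Y` along a partition. -/
def covSum {Ω : Type*} {a b : ℝ} (X Y : ℝ → Ω → ℝ) (π : IccPartition a b) (ω : Ω) : ℝ :=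
  ∑ i ∈ Finset.range π.n,
    (X (π.u (i + 1)) ω - X (π.u i) ω) * (Y (π.u (i + 1)) ω - Y (π.u i) ω)

/-- Left-endpoint Riemann sum of `X` against the increments of `Y` along a partition. -/
def itoSum {Ω : Type*} {a b : ℝ} (X Y : ℝ → Ω → ℝ) (π : IccPartition a b) (ω : Ω) : ℝ :=
  ∑ i ∈ Finset.range π.n, X (π.u i) ω * (Y (π.u (i + 1)) ω - Y (π.u i) ω)

/-- `Q` is the quadratic covariation `[X, Y]` on `[a, b]`: the limit in probability of the
sums of products of increments along any sequence of partitions with mesh tending to `0`. -/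
def IsQuadCovar {Ω : Type*} [MeasurableSpace Ω] (P : Measure Ω)
    (X Y : ℝ → Ω → ℝ) (a b : ℝ) (Q : Ω → ℝ) : Prop :=
  ∀ π : ℕ → IccPartition a b,
    Tendsto (fun k => (π k).mesh) atTop (𝓝 0) →
      TendstoInMeasure P (fun k => covSum X Y (π k)) atTop Q

/-- `I` is the Itô integral `∫_a^b X dY`: the limit in probability of left-endpoint Riemann
sums along any sequence of partitions with mesh tending to `0`. -/
def IsItoIntegral {Ω : Type*} [MeasurableSpace Ω] (P : Measure Ω)
    (X Y : ℝ → Ω → ℝ) (a b : ℝ) (I : Ω → ℝ) : Prop :=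
  ∀ π : ℕ → IccPartition a b,
    Tendsto (fun k => (π k).mesh) atTop (𝓝 0) →
      TendstoInMeasure P (fun k => itoSum X Y (π k)) atTop I

/-- Modulus of continuity of `f`. -/
def osc (f : ℝ → ℝ) (δ : ℝ) : ℝ :=
  sSup {y | ∃ s t : ℝ, |s - t| < δ ∧ y = |f s - f t|}

/-- `W` is a standard one-dimensional Brownian motion under `P`. -/
def IsBrownianMotion {Ω : Type*} [MeasurableSpace Ω] (P : Measure Ω)
    (W : ℝ → Ω → ℝ) : Prop :=
  (∀ t : ℝ, Measurable (W t)) ∧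
  (∀ ω, W 0 ω = 0) ∧
  (∀ ω, Continuous fun t => W t ω) ∧
  (∀ s t : ℝ, 0 ≤ s → s ≤ t →
    Measure.map (fun ω => W t ω - W s ω) P = gaussianReal 0 (t - s).toNNReal) ∧
  (∀ s t : ℝ, 0 ≤ s → s ≤ t →
    Indep (MeasurableSpace.comap (fun ω => W t ω - W s ω) inferInstance)
      (⨆ u ∈ Set.Icc (0:ℝ) s, MeasurableSpace.comap (W u) inferInstance) P)

/-- `B` is a Brownian motion on `[0, T]` with respect to the filtration `F` under `P`. -/
def IsBMWithRespectTo {Ω : Type*} [MeasurableSpace Ω] (P : Measure Ω) (T : ℝ)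
    (F : ℝ → MeasurableSpace Ω) (B : ℝ → Ω → ℝ) : Prop :=
  (∀ t ∈ Set.Icc (0:ℝ) T, @Measurable Ω ℝ (F t) _ (B t)) ∧
  (∀ ω, B 0 ω = 0) ∧
  (∀ ω, ContinuousOn (fun t => B t ω) (Set.Icc 0 T)) ∧
  (∀ s t : ℝ, 0 ≤ s → s ≤ t → t ≤ T →
    Measure.map (fun ω => B t ω - B s ω) P = gaussianReal 0 (t - s).toNNReal) ∧
  (∀ s t : ℝ, 0 ≤ s → s ≤ t → t ≤ T →
    Indep (MeasurableSpace.comap (fun ω => B t ω - B s ω) inferInstance) (F s) P)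


section Aux
open Real Set ENNReal NNReal

lemma integrable_id_gaussianReal : Integrable (fun x : ℝ => x) (gaussianReal 0 1) := by
  rw [gaussianReal_of_var_ne_zero 0 one_ne_zero,
    integrable_withDensity_iff (measurable_gaussianPDF 0 1)
      (ae_of_all _ fun x => ENNReal.ofReal_lt_top)]
  have h : (fun x : ℝ => x * (gaussianPDF 0 1 x).toReal)
      = fun x => (Real.sqrt (2 * π * 1))⁻¹ * (x * Real.exp (-(2⁻¹:ℝ) * x ^ 2)) := by
    ext x
    rw [gaussianPDF_def, ENNReal.toReal_ofReal (gaussianPDFReal_nonneg _ _ _),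
      gaussianPDFReal_def]
    push_cast
    ring_nf
  rw [h]
  exact ((integrable_mul_exp_neg_mul_sq (by norm_num : (0:ℝ) < 2⁻¹)).const_mul _)

lemma lintegral_abs_gaussianReal_lt_top :
    ∫⁻ x, (‖x‖₊ : ℝ≥0∞) ∂(gaussianReal 0 1) < ⊤ :=
  integrable_id_gaussianReal.hasFiniteIntegral

lemma ae_intervalIntegrable_div
    {Ω : Type*} [MeasurableSpace Ω] (P : Measure Ω) [IsProbabilityMeasure P]
    (W : ℝ → Ω → ℝ) (hmeas : ∀ t, Measurable (W t)) (h0 : ∀ ω, W 0 ω = 0)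
    (hcont : ∀ ω, Continuous fun t => W t ω)
    (hlaw : ∀ s t : ℝ, 0 ≤ s → s ≤ t →
      Measure.map (fun ω => W t ω - W s ω) P = gaussianReal 0 (t - s).toNNReal)
    (T : ℝ) (hT : 0 < T) :
    ∀ᵐ ω ∂P, IntervalIntegrable (fun u => W u ω / u) volume 0 T := by
  set C : ℝ≥0∞ := ∫⁻ x, (‖x‖₊ : ℝ≥0∞) ∂(gaussianReal 0 1) with hC
  have hCfin : C < ⊤ := lintegral_abs_gaussianReal_lt_top
  have hnn : Measurable fun x : ℝ => (‖x‖₊ : ℝ≥0∞) :=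
    measurable_nnnorm.coe_nnreal_ennreal
  have hWu : Measurable (Function.uncurry W) :=
    measurable_uncurry_of_continuous_of_measurable hcont hmeas
  have hmap : ∀ u : ℝ, 0 ≤ u → Measure.map (W u) P = gaussianReal 0 u.toNNReal := by
    intro u hu
    have h := hlaw 0 u le_rfl hu
    have heq : (fun ω => W u ω - W 0 ω) = W u := by ext ω; rw [h0, sub_zero]
    rw [heq, sub_zero] at h
    exact h
  have hscale : ∀ u : ℝ, 0 ≤ u →
      ∫⁻ ω, (‖W u ω‖₊ : ℝ≥0∞) ∂P = ENNReal.ofReal (Real.sqrt u) * C := by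
    intro u hu
    have h1 : Measure.map (fun x => Real.sqrt u * x) (gaussianReal 0 1)
        = gaussianReal 0 u.toNNReal := by
      have h2 := gaussianReal_map_const_mul (μ := 0) (v := 1) (Real.sqrt u)
      simp only [mul_zero, mul_one] at h2
      have h3 : (⟨Real.sqrt u ^ 2, sq_nonneg _⟩ : ℝ≥0) = u.toNNReal := by
        ext
        simp [Real.sq_sqrt hu, hu]
      rw [← h3]
      exact h2
    calc ∫⁻ ω, (‖W u ω‖₊ : ℝ≥0∞) ∂P
        = ∫⁻ x, (‖x‖₊ : ℝ≥0∞) ∂(Measure.map (W u) P) := (lintegral_map hnn (hmeas u)).symm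
      _ = ∫⁻ x, (‖x‖₊ : ℝ≥0∞) ∂(Measure.map (fun x => Real.sqrt u * x) (gaussianReal 0 1)) := by
          rw [hmap u hu, h1]
      _ = ∫⁻ x, (‖Real.sqrt u * x‖₊ : ℝ≥0∞) ∂(gaussianReal 0 1) :=
          lintegral_map hnn (measurable_const_mul _)
      _ = ∫⁻ x, ENNReal.ofReal (Real.sqrt u) * (‖x‖₊ : ℝ≥0∞) ∂(gaussianReal 0 1) := by
          congr 1; ext x
          rw [nnnorm_mul, ENNReal.coe_mul, ← enorm_eq_nnnorm (Real.sqrt u), Real.enorm_eq_ofReal (Real.sqrt_nonneg u)]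
      _ = ENNReal.ofReal (Real.sqrt u) * C := lintegral_const_mul _ hnn
  set ν : Measure ℝ := volume.restrict (Ioc (0:ℝ) T) with hν
  set H : Ω → ℝ → ℝ≥0∞ := fun ω u => (‖W u ω‖₊ : ℝ≥0∞) / ENNReal.ofReal u with hH
  have hHmeas : Measurable (Function.uncurry H) := by
    apply Measurable.div
    · exact (hnn.comp (hWu.comp measurable_swap))
    · exact ENNReal.measurable_ofReal.comp measurable_snd
  have hFmeas : Measurable fun ω => ∫⁻ u, H ω u ∂ν :=
    Measurable.lintegral_prod_right' hHmeas
  have hswap : ∫⁻ ω, (∫⁻ u, H ω u ∂ν) ∂P = ∫⁻ u, (∫⁻ ω, H ω u ∂P) ∂ν :=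
    lintegral_lintegral_swap hHmeas.aemeasurable
  have hrpow : Measurable fun u : ℝ => C * ENNReal.ofReal (u ^ (-(1/2) : ℝ)) :=
    (ENNReal.measurable_ofReal.comp (measurable_id.pow_const _)).const_mul C
  have hptwise : ∀ u ∈ Ioc (0:ℝ) T,
      (∫⁻ ω, H ω u ∂P) ≤ C * ENNReal.ofReal (u ^ (-(1/2) : ℝ)) := by
    intro u hu
    have hpos : 0 < u := hu.1
    have hne : (ENNReal.ofReal u)⁻¹ ≠ ⊤ :=
      ENNReal.inv_ne_top.mpr (ENNReal.ofReal_pos.mpr hpos).ne'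
    have h1 : (∫⁻ ω, H ω u ∂P)
        = (∫⁻ ω, (‖W u ω‖₊ : ℝ≥0∞) ∂P) * (ENNReal.ofReal u)⁻¹ := by
      simp_rw [hH, div_eq_mul_inv]
      exact lintegral_mul_const' _ _ hne
    have hsq : Real.sqrt u / u = u ^ (-(1/2) : ℝ) := by
      rw [Real.rpow_neg hpos.le, ← Real.sqrt_eq_rpow, Real.sqrt_div_self', one_div]
    rw [h1, hscale u hpos.le]
    calc ENNReal.ofReal (Real.sqrt u) * C * (ENNReal.ofReal u)⁻¹
        = C * (ENNReal.ofReal (Real.sqrt u) / ENNReal.ofReal u) := by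
          rw [div_eq_mul_inv]; ring
      _ = C * ENNReal.ofReal (Real.sqrt u / u) := by
          rw [ENNReal.ofReal_div_of_pos hpos]
      _ = C * ENNReal.ofReal (u ^ (-(1/2) : ℝ)) := by rw [hsq]
      _ ≤ C * ENNReal.ofReal (u ^ (-(1/2) : ℝ)) := le_rfl
  have hfin2 : ∫⁻ u in Ioc (0:ℝ) T, ENNReal.ofReal (u ^ (-(1/2):ℝ)) < ⊤ := by
    have hii : IntervalIntegrable (fun u:ℝ => u ^ (-(1/2):ℝ)) volume 0 T :=
      intervalIntegral.intervalIntegrable_rpow' (by norm_num)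
    rw [intervalIntegrable_iff_integrableOn_Ioc_of_le hT.le] at hii
    exact lt_of_le_of_lt (lintegral_mono fun u => Real.ofReal_le_enorm _) hii.2
  have hbound : ∫⁻ u, (∫⁻ ω, H ω u ∂P) ∂ν < ⊤ := by
    calc ∫⁻ u, (∫⁻ ω, H ω u ∂P) ∂ν
        ≤ ∫⁻ u in Ioc (0:ℝ) T, C * ENNReal.ofReal (u ^ (-(1/2) : ℝ)) :=
          setLIntegral_mono hrpow hptwise
      _ = C * ∫⁻ u in Ioc (0:ℝ) T, ENNReal.ofReal (u ^ (-(1/2) : ℝ)) :=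
          lintegral_const_mul _ (ENNReal.measurable_ofReal.comp (measurable_id.pow_const _))
      _ < ⊤ := ENNReal.mul_lt_top hCfin hfin2
  have hae : ∀ᵐ ω ∂P, (∫⁻ u, H ω u ∂ν) < ⊤ :=
    ae_lt_top hFmeas (by rw [hswap]; exact hbound.ne)
  filter_upwards [hae] with ω hω
  rw [intervalIntegrable_iff_integrableOn_Ioc_of_le hT.le]
  refine ⟨((hcont ω).measurable.div measurable_id).aestronglyMeasurable, ?_⟩
  have heq : ∫⁻ u in Ioc (0:ℝ) T, (‖W u ω / u‖₊ : ℝ≥0∞) = ∫⁻ u, H ω u ∂ν := by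
    refine setLIntegral_congr_fun measurableSet_Ioc (fun u hu => ?_)
    rw [hH]
    rw [nnnorm_div, ENNReal.coe_div (nnnorm_ne_zero_iff.mpr hu.1.ne'),
      ← enorm_eq_nnnorm u, Real.enorm_eq_ofReal hu.1.le]
  show HasFiniteIntegral _ _
  rw [HasFiniteIntegral]
  exact lt_of_eq_of_lt heq hω

/-- uniform partition of `[0,t]` -/
def unifPart (t : ℝ) (ht : 0 ≤ t) (k : ℕ) : IccPartition 0 t where
  n := k + 1
  npos := k.succ_pos
  u := fun i => t * i / (k + 1)
  left := by simp
  right := by field_simp; norm_num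
  mono := fun i _ => by
    have hk : (0:ℝ) < (k:ℝ) + 1 := by positivity
    push_cast
    rw [div_le_div_iff_of_pos_right hk]
    nlinarith [Nat.cast_nonneg (α := ℝ) i]

lemma unifPart_mesh (t : ℝ) (ht : 0 ≤ t) (k : ℕ) : (unifPart t ht k).mesh = t / (k+1) := by
  have h : (fun i : Fin (k+1) => (unifPart t ht k).u (i+1) - (unifPart t ht k).u i)
      = fun _ => t / (k+1) := by
    ext i
    show t * ((i : ℕ) + 1 : ℕ) / (k + 1) - t * (i : ℕ) / (k + 1) = t / (k+1)
    push_cast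
    ring
  rw [IccPartition.mesh]
  show ⨆ i : Fin (k+1), ((unifPart t ht k).u (i+1) - (unifPart t ht k).u i) = t / (k+1)
  rw [h, ciSup_const]

/-- time-reversed uniform partition of `[T-t, T]` -/
def revPart (T t : ℝ) (ht : 0 ≤ t) (k : ℕ) : IccPartition (T - t) T where
  n := k + 1
  npos := k.succ_pos
  u := fun j => T - t * ((k + 1 - j : ℕ) : ℝ) / (k + 1)
  left := by field_simp; rw [Nat.sub_zero]; push_cast; ring
  right := by simp
  mono := fun j _ => by
    have hle : ((k + 1 - (j+1) : ℕ) : ℝ) ≤ ((k + 1 - j : ℕ) : ℝ) := by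
      exact_mod_cast Nat.sub_le_sub_left (Nat.le_succ j) (k+1)
    have hk : (0:ℝ) < (k:ℝ) + 1 := by positivity
    have h2 : t * ((k + 1 - (j+1) : ℕ) : ℝ) / (k + 1) ≤ t * ((k + 1 - j : ℕ) : ℝ) / (k + 1) :=
      (div_le_div_iff_of_pos_right hk).mpr (mul_le_mul_of_nonneg_left hle ht)
    show T - t * ((k + 1 - j : ℕ) : ℝ) / (k + 1) ≤ T - t * ((k + 1 - (j+1) : ℕ) : ℝ) / (k + 1)
    linarith

lemma revPart_step (T t : ℝ) (ht : 0 ≤ t) (k : ℕ) {j : ℕ} (hj : j < k + 1) :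
    (revPart T t ht k).u (j+1) - (revPart T t ht k).u j = t / (k+1) := by
  have h1 : k + 1 - (j + 1) = k - j := by omega
  have h2 : k + 1 - j = (k - j) + 1 := by omega
  show (T - t * ((k + 1 - (j+1) : ℕ) : ℝ) / (k + 1)) - (T - t * ((k + 1 - j : ℕ) : ℝ) / (k + 1))
      = t / (k+1)
  rw [h1, h2]
  push_cast
  ring

lemma revPart_mesh (T t : ℝ) (ht : 0 ≤ t) (k : ℕ) : (revPart T t ht k).mesh = t / (k+1) := by
  have h : (fun j : Fin (k+1) => (revPart T t ht k).u (j+1) - (revPart T t ht k).u j)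
      = fun _ => t / (k+1) := by
    ext j
    exact revPart_step T t ht k j.isLt
  rw [IccPartition.mesh]
  show ⨆ j : Fin (k+1), ((revPart T t ht k).u (j+1) - (revPart T t ht k).u j) = t / (k+1)
  rw [h, ciSup_const]

lemma revPart_mem (T t : ℝ) (ht : 0 ≤ t) (k : ℕ) (j : ℕ) :
    T - t ≤ (revPart T t ht k).u j ∧ (revPart T t ht k).u j ≤ T := by
  have hk : (0:ℝ) < (k:ℝ) + 1 := by positivity
  have h1 : ((k + 1 - j : ℕ) : ℝ) ≤ ((k + 1 : ℕ) : ℝ) := by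
    exact_mod_cast Nat.sub_le (k+1) j
  constructor
  · show T - t ≤ T - t * ((k + 1 - j : ℕ) : ℝ) / (k + 1)
    have : t * ((k + 1 - j : ℕ) : ℝ) / (k + 1) ≤ t * ((k+1 : ℕ) : ℝ) / (k+1) := by
      exact (div_le_div_iff_of_pos_right hk).mpr (mul_le_mul_of_nonneg_left h1 ht)
    push_cast at this ⊢
    have h2 : t * ((k:ℝ)+1) / ((k:ℝ)+1) = t := by field_simp
    linarith [h2 ▸ this]
  · show T - t * ((k + 1 - j : ℕ) : ℝ) / (k + 1) ≤ T
    have : 0 ≤ t * ((k + 1 - j : ℕ) : ℝ) / (k + 1) := by positivity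
    linarith

lemma revPart_reflect (T t : ℝ) (ht : 0 ≤ t) (k : ℕ) (j : ℕ) :
    T - (revPart T t ht k).u j = (unifPart t ht k).u (k + 1 - j) := by
  show T - (T - t * ((k + 1 - j : ℕ) : ℝ) / (k + 1)) = t * ((k + 1 - j : ℕ) : ℝ) / (k + 1)
  ring

lemma mesh_tendsto (t : ℝ) : Tendsto (fun k : ℕ => t / (k+1)) atTop (𝓝 0) := by
  have h := tendsto_one_div_add_atTop_nhds_zero_nat.const_mul t
  rw [mul_zero] at h
  convert h using 2 with k
  rw [div_eq_mul_inv, one_div]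

lemma covSum_split {Ω : Type*} (f : ℝ → ℝ) {ε : ℝ} (hε : ε ≠ 0) (W : ℝ → Ω → ℝ)
    {a b : ℝ} (prt : IccPartition a b) (ω : Ω) :
    ε⁻¹ * covSum (fun s ω => f (ε * W s ω)) (fun s ω => ε * W s ω) prt ω
      = (∑ i ∈ Finset.range prt.n, f (ε * W (prt.u (i+1)) ω) * (W (prt.u (i+1)) ω - W (prt.u i) ω))
        - itoSum (fun s ω => f (ε * W s ω)) W prt ω := by
  unfold covSum itoSum
  rw [Finset.mul_sum, ← Finset.sum_sub_distrib]
  refine Finset.sum_congr rfl fun i _ => ?_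
  field_simp

lemma reflect_sum {Ω : Type*} (f : ℝ → ℝ) (ε : ℝ) (W : ℝ → Ω → ℝ) (T t : ℝ) (ht : 0 ≤ t)
    (k : ℕ) (ω : Ω) :
    (∑ j ∈ Finset.range (k+1),
      f (ε * W (T - (revPart T t ht k).u j) ω) *
        (W (T - (revPart T t ht k).u (j+1)) ω - W (T - (revPart T t ht k).u j) ω))
    = - ∑ i ∈ Finset.range (k+1),
        f (ε * W ((unifPart t ht k).u (i+1)) ω) *
          (W ((unifPart t ht k).u (i+1)) ω - W ((unifPart t ht k).u i) ω) := by
  have hre : ∀ j : ℕ, T - (revPart T t ht k).u j = (unifPart t ht k).u (k + 1 - j) :=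
    revPart_reflect T t ht k
  simp only [hre]
  rw [← Finset.sum_range_reflect
    (fun j => f (ε * W ((unifPart t ht k).u (k + 1 - j)) ω) *
      (W ((unifPart t ht k).u (k + 1 - (j+1))) ω - W ((unifPart t ht k).u (k + 1 - j)) ω)) (k+1),
    ← Finset.sum_neg_distrib]
  refine Finset.sum_congr rfl fun i hi => ?_
  rw [Finset.mem_range] at hi
  rw [show k + 1 - (k + 1 - 1 - i) = i + 1 by omega,
    show k + 1 - (k + 1 - 1 - i + 1) = i by omega]
  ring

lemma tendsto_R (T t : ℝ) (ht : 0 ≤ t) (htT : t ≤ T) (gg φ : ℝ → ℝ) (hgg : Continuous gg)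
    (hφ : IntervalIntegrable φ volume (T - t) T) :
    Tendsto (fun k => ∑ j ∈ Finset.range (k+1),
        gg ((revPart T t ht k).u j) *
          ∫ s in (revPart T t ht k).u j..(revPart T t ht k).u (j+1), φ s)
      atTop (𝓝 (∫ s in (T-t)..T, gg s * φ s)) := by
  have hcd : T - t ≤ T := by linarith
  have hsub : ∀ k : ℕ, ∀ j : ℕ,
      Set.uIcc ((revPart T t ht k).u j) ((revPart T t ht k).u (j+1)) ⊆ Set.uIcc (T - t) T := by
    intro k j
    apply Set.uIcc_subset_uIcc
    · rw [Set.uIcc_of_le hcd]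
      exact ⟨(revPart_mem T t ht k j).1, (revPart_mem T t ht k j).2⟩
    · rw [Set.uIcc_of_le hcd]
      exact ⟨(revPart_mem T t ht k (j+1)).1, (revPart_mem T t ht k (j+1)).2⟩
  have hφj : ∀ k j : ℕ, IntervalIntegrable φ volume
      ((revPart T t ht k).u j) ((revPart T t ht k).u (j+1)) :=
    fun k j => hφ.mono_set (hsub k j)
  have hgφ : IntervalIntegrable (fun s => gg s * φ s) volume (T - t) T :=
    hφ.continuousOn_mul hgg.continuousOn
  have hgφj : ∀ k j : ℕ, IntervalIntegrable (fun s => gg s * φ s) volume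
      ((revPart T t ht k).u j) ((revPart T t ht k).u (j+1)) :=
    fun k j => hgφ.mono_set (hsub k j)
  have hIsum : ∀ k : ℕ, (∫ s in (T-t)..T, gg s * φ s)
      = ∑ j ∈ Finset.range (k+1),
          ∫ s in (revPart T t ht k).u j..(revPart T t ht k).u (j+1), gg s * φ s := by
    intro k
    have h0 : (revPart T t ht k).u 0 = T - t := (revPart T t ht k).left
    have hn : (revPart T t ht k).u (k+1) = T := (revPart T t ht k).right
    rw [intervalIntegral.sum_integral_adjacent_intervals (fun j _ => hgφj k j), h0, hn]
  set C : ℝ := ∫ s in (T-t)..T, |φ s| with hCdef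
  have hCsum : ∀ k : ℕ, C = ∑ j ∈ Finset.range (k+1),
      ∫ s in (revPart T t ht k).u j..(revPart T t ht k).u (j+1), |φ s| := by
    intro k
    have h0 : (revPart T t ht k).u 0 = T - t := (revPart T t ht k).left
    have hn : (revPart T t ht k).u (k+1) = T := (revPart T t ht k).right
    rw [hCdef, intervalIntegral.sum_integral_adjacent_intervals (fun j _ => (hφj k j).abs),
      h0, hn]
  have hC0 : 0 ≤ C := intervalIntegral.integral_nonneg hcd (fun s _ => abs_nonneg _)
  rw [Metric.tendsto_atTop]
  intro η hη
  set η' : ℝ := η / (2 * (C + 1)) with hη'def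
  have hη' : 0 < η' := by positivity
  -- uniform continuity of gg on [T-t, T]
  have hunif : UniformContinuousOn gg (Set.Icc (T-t) T) :=
    isCompact_Icc.uniformContinuousOn_of_continuous hgg.continuousOn
  rw [Metric.uniformContinuousOn_iff] at hunif
  obtain ⟨δ, hδ, hδ'⟩ := hunif η' hη'
  obtain ⟨N, hN⟩ : ∃ N : ℕ, ∀ k ≥ N, t / (k+1) < δ := by
    have := (mesh_tendsto t).eventually (eventually_lt_nhds hδ)
    rw [eventually_atTop] at this
    simpa using this
  refine ⟨N, fun k hk => ?_⟩
  have hmesh : t / (k+1) < δ := hN k hk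
  -- pointwise oscillation bound
  have hosc : ∀ j < k + 1, ∀ s ∈ Set.Icc ((revPart T t ht k).u j) ((revPart T t ht k).u (j+1)),
      |gg ((revPart T t ht k).u j) - gg s| ≤ η' := by
    intro j hj s hs
    have hstep := revPart_step T t ht k hj
    have h1 := (revPart_mem T t ht k j).1
    have h2 := (revPart_mem T t ht k (j+1)).2
    have hmem1 : (revPart T t ht k).u j ∈ Set.Icc (T-t) T := ⟨h1, (revPart_mem T t ht k j).2⟩
    have hmems : s ∈ Set.Icc (T-t) T := ⟨le_trans h1 hs.1, le_trans hs.2 h2⟩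
    have hdist : dist ((revPart T t ht k).u j) s < δ := by
      rw [Real.dist_eq, abs_sub_comm, abs_of_nonneg (by linarith [hs.1])]
      have : s - (revPart T t ht k).u j ≤ t / (k+1) := by linarith [hs.2]
      linarith
    have := hδ' _ hmem1 _ hmems hdist
    rw [Real.dist_eq] at this
    exact this.le
  -- the difference
  have hdiff : ∀ j < k + 1,
      gg ((revPart T t ht k).u j) *
          (∫ s in (revPart T t ht k).u j..(revPart T t ht k).u (j+1), φ s)
        - (∫ s in (revPart T t ht k).u j..(revPart T t ht k).u (j+1), gg s * φ s)
      = ∫ s in (revPart T t ht k).u j..(revPart T t ht k).u (j+1),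
          (gg ((revPart T t ht k).u j) - gg s) * φ s := by
    intro j hj
    rw [← intervalIntegral.integral_const_mul,
      ← intervalIntegral.integral_sub ((hφj k j).const_mul _) (hgφj k j)]
    congr 1
    ext s
    ring
  have hjle : ∀ j < k + 1, (revPart T t ht k).u j ≤ (revPart T t ht k).u (j+1) :=
    fun j hj => (revPart T t ht k).mono j hj
  -- bound each term
  have hbd : ∀ j < k + 1,
      |∫ s in (revPart T t ht k).u j..(revPart T t ht k).u (j+1),
          (gg ((revPart T t ht k).u j) - gg s) * φ s|
        ≤ ∫ s in (revPart T t ht k).u j..(revPart T t ht k).u (j+1), η' * |φ s| := by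
    intro j hj
    refine le_trans (intervalIntegral.abs_integral_le_integral_abs (hjle j hj)) ?_
    apply intervalIntegral.integral_mono_on (hjle j hj)
      (((hφj k j).continuousOn_mul ((continuous_const.sub hgg).continuousOn)).abs)
      ((hφj k j).abs.const_mul _)
    intro s hs
    rw [abs_mul]
    exact mul_le_mul_of_nonneg_right (hosc j hj s hs) (abs_nonneg _)
  -- combine
  have hfinal : dist (∑ j ∈ Finset.range (k+1),
      gg ((revPart T t ht k).u j) *
        ∫ s in (revPart T t ht k).u j..(revPart T t ht k).u (j+1), φ s)
      (∫ s in (T-t)..T, gg s * φ s) ≤ η' * C := by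
    rw [Real.dist_eq, hIsum k, ← Finset.sum_sub_distrib]
    refine le_trans (Finset.abs_sum_le_sum_abs _ _) ?_
    have h1 : ∑ j ∈ Finset.range (k+1),
        |gg ((revPart T t ht k).u j) *
            (∫ s in (revPart T t ht k).u j..(revPart T t ht k).u (j+1), φ s)
          - (∫ s in (revPart T t ht k).u j..(revPart T t ht k).u (j+1), gg s * φ s)|
        ≤ ∑ j ∈ Finset.range (k+1),
            ∫ s in (revPart T t ht k).u j..(revPart T t ht k).u (j+1), η' * |φ s| := by
      refine Finset.sum_le_sum fun j hj => ?_
      rw [Finset.mem_range] at hj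
      rw [hdiff j hj]
      exact hbd j hj
    refine le_trans h1 ?_
    have h2 : ∑ j ∈ Finset.range (k+1),
        (∫ s in (revPart T t ht k).u j..(revPart T t ht k).u (j+1), η' * |φ s|)
        = η' * C := by
      rw [hCsum k, Finset.mul_sum]
      exact Finset.sum_congr rfl fun j _ => intervalIntegral.integral_const_mul _ _
    exact h2.le
  refine lt_of_le_of_lt hfinal ?_
  rw [hη'def]
  rw [div_mul_eq_mul_div, div_lt_iff₀ (by positivity)]
  nlinarith


lemma tim_comp {Ω : Type*} [MeasurableSpace Ω] {P : Measure Ω} {F : ℕ → Ω → ℝ} {G : Ω → ℝ}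
    (h : TendstoInMeasure P F atTop G) {ns : ℕ → ℕ} (hns : StrictMono ns) :
    TendstoInMeasure P (fun i => F (ns i)) atTop G :=
  fun ε hε => (h ε hε).comp hns.tendsto_atTop

end Aux

/-- Corollary 1 of the paper: representation of `L_ε = ε⁻¹[f(εW), εW]`. -/
theorem representation_of_normalized_quadratic_covariation
    {Ω : Type*} [MeasurableSpace Ω] (P : Measure Ω) [IsProbabilityMeasure P]
    (W : ℝ → Ω → ℝ) (hW : IsBrownianMotion P W)
    (T : ℝ) (hT : 0 < T)
    (f : ℝ → ℝ) (hfb : ∃ M : ℝ, ∀ x, |f x| ≤ M) (hfc : Continuous f)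
    (ε : ℝ) (hε : 0 < ε)
    -- β(t) = Ŵ(t) - W(T) + ∫₀ᵗ Ŵ(s)/(T - s) ds, an H-Brownian motion
    (β : ℝ → Ω → ℝ)
    (hβ : ∀ t, ∀ ω, β t ω = W (T - t) ω - W T ω + ∫ s in (0:ℝ)..t, W (T - s) ω / (T - s))
    (hβBM : IsBMWithRespectTo P T
      (fun t => MeasurableSpace.comap (W T) inferInstance ⊔
        ⨆ u ∈ Set.Icc (0:ℝ) t, MeasurableSpace.comap (β u) inferInstance) β)
    -- Q t = [f(εW), εW](t), S₁ t = ∫₀ᵗ f(εW(s)) dW(s), S₂ t = ∫_{T-t}^T f(εŴ(s)) dβ(s)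
    (Q S₁ S₂ : ℝ → Ω → ℝ)
    (hQ : ∀ t ∈ Set.Icc (0:ℝ) T,
      IsQuadCovar P (fun s ω => f (ε * W s ω)) (fun s ω => ε * W s ω) 0 t (Q t))
    (hS₁ : ∀ t ∈ Set.Icc (0:ℝ) T,
      IsItoIntegral P (fun s ω => f (ε * W s ω)) W 0 t (S₁ t))
    (hS₂ : ∀ t ∈ Set.Icc (0:ℝ) T,
      IsItoIntegral P (fun s ω => f (ε * W (T - s) ω)) β (T - t) T (S₂ t)) :
    ∀ t ∈ Set.Icc (0:ℝ) T, ∀ᵐ ω ∂P,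
      ε⁻¹ * Q t ω = -S₁ t ω - S₂ t ω + ∫ s in (0:ℝ)..t, f (ε * W s ω) * (W s ω / s) := by
  intro t ht
  obtain ⟨ht0, htT⟩ := ht
  obtain ⟨hWmeas, hW0, hWcont, hWlaw, -⟩ := hW
  have hGae := ae_intervalIntegrable_div P W hWmeas hW0 hWcont hWlaw T hT
  set π : ℕ → IccPartition 0 t := unifPart t ht0 with hπdef
  set ρ : ℕ → IccPartition (T-t) T := revPart T t ht0 with hρdef
  have hπmesh : Tendsto (fun k => (π k).mesh) atTop (𝓝 0) := by
    simp only [hπdef, unifPart_mesh t ht0]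
    exact mesh_tendsto t
  have hρmesh : Tendsto (fun k => (ρ k).mesh) atTop (𝓝 0) := by
    simp only [hρdef, revPart_mesh T t ht0]
    exact mesh_tendsto t
  have hQm := hQ t ⟨ht0, htT⟩ π hπmesh
  have hS1m := hS₁ t ⟨ht0, htT⟩ π hπmesh
  have hS2m := hS₂ t ⟨ht0, htT⟩ ρ hρmesh
  obtain ⟨n1, hn1, hae1⟩ := hQm.exists_seq_tendsto_ae
  obtain ⟨n2, hn2, hae2⟩ := (tim_comp hS1m hn1).exists_seq_tendsto_ae
  obtain ⟨n3, hn3, hae3⟩ := (tim_comp (tim_comp hS2m hn1) hn2).exists_seq_tendsto_ae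
  have hn23 : Tendsto (fun k => n2 (n3 k)) atTop atTop :=
    hn2.tendsto_atTop.comp hn3.tendsto_atTop
  have hNt : Tendsto (fun k => n1 (n2 (n3 k))) atTop atTop :=
    hn1.tendsto_atTop.comp hn23
  filter_upwards [hGae, hae1, hae2, hae3] with ω hG h1 h2 h3
  -- integrability of the singular drift along the path
  have hφ : IntervalIntegrable (fun s => W (T - s) ω / (T - s)) volume 0 T := by
    have h := (hG.comp_sub_left T).symm
    simpa using h
  have hsubT : ∀ c d : ℝ, 0 ≤ c → c ≤ T → 0 ≤ d → d ≤ T →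
      Set.uIcc c d ⊆ Set.uIcc 0 T := by
    intro c d hc hcT hd hdT
    apply Set.uIcc_subset_uIcc <;> rw [Set.uIcc_of_le hT.le]
    · exact ⟨hc, hcT⟩
    · exact ⟨hd, hdT⟩
  have hφtT : IntervalIntegrable (fun s => W (T - s) ω / (T - s)) volume (T - t) T :=
    hφ.mono_set (hsubT _ _ (by linarith) (by linarith) hT.le le_rfl)
  -- β increments
  have hβinc : ∀ k : ℕ, ∀ j < k + 1,
      β ((ρ k).u (j+1)) ω - β ((ρ k).u j) ω
        = (W (T - (ρ k).u (j+1)) ω - W (T - (ρ k).u j) ω)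
          + ∫ s in (ρ k).u j..(ρ k).u (j+1), W (T - s) ω / (T - s) := by
    intro k j _
    have hm1 := revPart_mem T t ht0 k j
    have hm2 := revPart_mem T t ht0 k (j+1)
    have hia : IntervalIntegrable (fun s => W (T - s) ω / (T - s)) volume 0 ((ρ k).u j) :=
      hφ.mono_set (hsubT 0 _ le_rfl hT.le (by linarith [hm1.1]) hm1.2)
    have hib : IntervalIntegrable (fun s => W (T - s) ω / (T - s)) volume 0 ((ρ k).u (j+1)) :=
      hφ.mono_set (hsubT 0 _ le_rfl hT.le (by linarith [hm2.1]) hm2.2)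
    have hsub := intervalIntegral.integral_interval_sub_left hib hia
    rw [hβ ((ρ k).u (j+1)) ω, hβ ((ρ k).u j) ω]
    linarith [hsub]
  -- the Riemann-sum remainder
  set R : ℕ → ℝ := fun k => ∑ j ∈ Finset.range (k+1),
      (fun s => f (ε * W (T - s) ω)) ((ρ k).u j) *
        ∫ s in (ρ k).u j..(ρ k).u (j+1), W (T - s) ω / (T - s) with hRdef
  -- key algebraic identity
  have hkey : ∀ k : ℕ,
      ε⁻¹ * covSum (fun s ω => f (ε * W s ω)) (fun s ω => ε * W s ω) (π k) ω
        = - itoSum (fun s ω => f (ε * W s ω)) W (π k) ω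
          - itoSum (fun s ω => f (ε * W (T - s) ω)) β (ρ k) ω + R k := by
    intro k
    have hA := covSum_split f hε.ne' W (π k) ω
    have hito : itoSum (fun s ω => f (ε * W (T - s) ω)) β (ρ k) ω
        = (∑ j ∈ Finset.range (k+1),
            f (ε * W (T - (ρ k).u j) ω) *
              (W (T - (ρ k).u (j+1)) ω - W (T - (ρ k).u j) ω)) + R k := by
      show (∑ j ∈ Finset.range (k+1),
          f (ε * W (T - (ρ k).u j) ω) * (β ((ρ k).u (j+1)) ω - β ((ρ k).u j) ω)) = _
      rw [hRdef, ← Finset.sum_add_distrib]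
      refine Finset.sum_congr rfl fun j hj => ?_
      rw [Finset.mem_range] at hj
      rw [hβinc k j hj]
      ring
    have hrefl := reflect_sum f ε W T t ht0 k ω
    have hAn : (π k).n = k + 1 := rfl
    rw [hAn] at hA
    rw [hA, hito, hrefl]
    ring
  -- convergence of the remainder
  have hRlim : Tendsto R atTop
      (𝓝 (∫ s in (T-t)..T, f (ε * W (T - s) ω) * (W (T - s) ω / (T - s)))) := by
    have hggc : Continuous fun s => f (ε * W (T - s) ω) :=
      hfc.comp (continuous_const.mul ((hWcont ω).comp (continuous_const.sub continuous_id)))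
    exact tendsto_R T t ht0 htT (fun s => f (ε * W (T - s) ω))
      (fun s => W (T - s) ω / (T - s)) hggc hφtT
  have hIrw : (∫ s in (T-t)..T, f (ε * W (T - s) ω) * (W (T - s) ω / (T - s)))
      = ∫ s in (0:ℝ)..t, f (ε * W s ω) * (W s ω / s) := by
    have h := intervalIntegral.integral_comp_sub_left
      (a := T - t) (b := T) (fun u => f (ε * W u ω) * (W u ω / u)) T
    simpa using h
  -- pass to the limit along the common subsequence
  have hL1 : Tendsto (fun k =>
      ε⁻¹ * covSum (fun s ω => f (ε * W s ω)) (fun s ω => ε * W s ω) (π (n1 (n2 (n3 k)))) ω)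
      atTop (𝓝 (ε⁻¹ * Q t ω)) :=
    (h1.comp hn23).const_mul ε⁻¹
  have hL1' : Tendsto (fun k =>
      - itoSum (fun s ω => f (ε * W s ω)) W (π (n1 (n2 (n3 k)))) ω
        - itoSum (fun s ω => f (ε * W (T - s) ω)) β (ρ (n1 (n2 (n3 k)))) ω
        + R (n1 (n2 (n3 k)))) atTop (𝓝 (ε⁻¹ * Q t ω)) :=
    hL1.congr fun k => hkey (n1 (n2 (n3 k)))
  have hL2 : Tendsto (fun k =>
      - itoSum (fun s ω => f (ε * W s ω)) W (π (n1 (n2 (n3 k)))) ω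
        - itoSum (fun s ω => f (ε * W (T - s) ω)) β (ρ (n1 (n2 (n3 k)))) ω
        + R (n1 (n2 (n3 k)))) atTop
      (𝓝 (- S₁ t ω - S₂ t ω
        + ∫ s in (T-t)..T, f (ε * W (T - s) ω) * (W (T - s) ω / (T - s)))) :=
    (((h2.comp hn3.tendsto_atTop).neg.sub h3).add (hRlim.comp hNt))
  have := tendsto_nhds_unique hL1' hL2
  rw [this, hIrw]

end
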